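/- Let R = Sym(V*), s an involution, R^s the invariant subring, and δ_s ∈ R with ∂_s(δ_s) = 1. Then the R^s-algebra R is a free left R^s-module with basis {1, δ_s}; equivalently, B_s = R ⊗_{R^s} R is a free left R-module with basis {1 ⊗ 1, δ_s ⊗ 1}. -/

import Mathlib

/-- Let `R = Sym(V*)` (viewed abstractly as a commutative ring) with ring involution `s`,
invariant subring `R^s = {x | s x = x}`, and Demazure operator `d` (so `α * d f = f - s f`
for a nonzerodivisor `α`), and suppose `δ` satisfies `d δ = 1` (Demazure surjectivity).
Then `R` is a free left `R^s`-module with basis `{1, δ}`. -/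
theorem free_basis_one_delta {R : Type*} [CommRing R]
    (s : R →+* R) (hs : ∀ f : R, s (s f) = f)
    (α δ : R) (hreg : ∀ r : R, α * r = 0 → r = 0)
    (d : R → R) (hd : ∀ f : R, α * d f = f - s f) (hδ : d δ = 1) :
    ∃ b : Module.Basis (Fin 2) (RingHom.eqLocus s (RingHom.id R)) R,
      b 0 = 1 ∧ b 1 = δ := by
  have hα : α = δ - s δ := by have := hd δ; rwa [hδ, mul_one] at this
  have hsα : s α = -α := by rw [hα, map_sub, hs]; ring
  have hdinv : ∀ f, s (d f) = d f := by
    intro f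
    have h2 := congrArg s (hd f)
    rw [map_mul, map_sub, hs, hsα] at h2
    have h3 := hd f
    have h1 : α * (s (d f) - d f) = 0 := by
      have : α * (s (d f) - d f) = -(-α * s (d f)) - α * d f := by ring
      rw [this, h2, h3]; ring
    exact sub_eq_zero.mp (hreg _ h1)
  set S := RingHom.eqLocus s (RingHom.id R) with hS
  have memS : ∀ x : R, x ∈ S ↔ s x = x := fun x => Iff.rfl
  have li : LinearIndependent S ![(1:R), δ] := by
    rw [Fintype.linearIndependent_iff]
    intro g hg
    simp only [Fin.sum_univ_two, Matrix.cons_val_zero, Matrix.cons_val_one, Matrix.head_cons] at hg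
    have hg2 : (g 0 : R) * 1 + (g 1 : R) * δ = 0 := hg
    rw [mul_one] at hg2
    have hg0 : s ((g 0 : R)) = (g 0 : R) := (g 0).2
    have hg1 : s ((g 1 : R)) = (g 1 : R) := (g 1).2
    have hg' := congrArg s hg2
    rw [map_add, map_mul, hg0, hg1, map_zero] at hg'
    have hb : (g 1 : R) * α = 0 := by
      rw [hα]; have : (g 1 : R) * (δ - s δ) = ((g 0 : R) + (g 1 : R) * δ) - ((g 0 : R) + (g 1 : R) * s δ) := by ring
      rw [this, hg2, hg']; ring
    have hb0 : (g 1 : R) = 0 := hreg _ (by rw [mul_comm]; exact hb)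
    have ha0 : (g 0 : R) = 0 := by rw [hb0, zero_mul, add_zero] at hg2; exact hg2
    intro i
    fin_cases i
    · exact Subtype.ext ha0
    · exact Subtype.ext hb0
  have hspan : ⊤ ≤ Submodule.span S (Set.range ![(1:R), δ]) := by
    intro f _
    have hbmem : d f ∈ S := hdinv f
    have hamem : f - d f * δ ∈ S := by
      rw [memS, map_sub, map_mul, hdinv]
      have h3 := hd f
      have : s f = f - α * d f := by rw [h3]; ring
      rw [this, hα]; ring
    have hf : f = (⟨f - d f * δ, hamem⟩ : S) • (1 : R) + (⟨d f, hbmem⟩ : S) • δ := by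
      simp only [Subring.smul_def, smul_eq_mul, mul_one]; ring
    rw [hf]
    exact Submodule.add_mem _
      (Submodule.smul_mem _ _ (Submodule.subset_span ⟨0, rfl⟩))
      (Submodule.smul_mem _ _ (Submodule.subset_span ⟨1, rfl⟩))
  refine ⟨Module.Basis.mk li hspan, ?_, ?_⟩
  · rw [Module.Basis.mk_apply]; rfl
  · rw [Module.Basis.mk_apply]; rfl
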